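/- Let G be a finite simple graph, a a vertex of G, and G' = G \ {a}. If K is a potential maximal clique of G', then at least one of K and K ∪ {a} is a potential maximal clique of G. -/

import Mathlib

open SimpleGraph

variable {V : Type*}

/-- `C` is a connected component of `G \ K`:
nonempty, disjoint from `K`, connected, and maximal such. -/
def IsCompOf (G : SimpleGraph V) (K C : Set V) : Prop :=
  C.Nonempty ∧ Disjoint C K ∧ (G.induce C).Connected ∧
    ∀ D : Set V, C ⊆ D → Disjoint D K → (G.induce D).Connected → D = C

/-- The neighborhood of a set `C`: vertices outside `C` with a neighbor in `C`. -/
def nbhd (G : SimpleGraph V) (C : Set V) : Set V :=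
  {v | v ∉ C ∧ ∃ u ∈ C, G.Adj u v}

/-- `C` is a full component for `K` in `G`. -/
def IsFullComp (G : SimpleGraph V) (K C : Set V) : Prop :=
  IsCompOf G K C ∧ ∀ v ∈ K, ∃ u ∈ C, G.Adj u v

/-- Bouchitté–Todinca characterization of potential maximal cliques:
(a) no full component, (b) non-adjacent pairs of `K` covered by a common component. -/
def IsPMC (G : SimpleGraph V) (K : Set V) : Prop :=
  (∀ C : Set V, IsCompOf G K C → ¬ ∀ v ∈ K, ∃ u ∈ C, G.Adj u v) ∧
  (∀ x ∈ K, ∀ y ∈ K, x ≠ y → ¬ G.Adj x y →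
    ∃ C : Set V, IsCompOf G K C ∧ (∃ u ∈ C, G.Adj u x) ∧ (∃ u ∈ C, G.Adj u y))

/-! ### Auxiliary lemmas -/

lemma induce_singleton_connected' (G : SimpleGraph V) (x : V) :
    (G.induce {x}).Connected := by
  haveI : Nonempty ↥({x} : Set V) := ⟨⟨x, rfl⟩⟩
  refine ⟨fun u v => ?_⟩
  have : u = v := Subtype.ext (u.2.trans v.2.symm)
  exact this ▸ Reachable.refl _

noncomputable def imageIsoAux (G : SimpleGraph V) (S : Set V) (C : Set ↥S) :
    (G.induce S).induce C ≃g G.induce (Subtype.val '' C) where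
  toEquiv := Equiv.Set.image Subtype.val C Subtype.val_injective
  map_rel_iff' := by
    intro u v
    simp [Equiv.Set.image, Equiv.Set.imageOfInjOn, comap_adj]

lemma connected_image_iff' (G : SimpleGraph V) (S : Set V) (C : Set ↥S) :
    ((G.induce S).induce C).Connected ↔ (G.induce (Subtype.val '' C)).Connected :=
  (imageIsoAux G S C).connected_iff

/-- Any nonempty connected set disjoint from `K` extends to a component. -/
lemma exists_comp_extension [Fintype V] (G : SimpleGraph V) (K T : Set V)
    (hne : T.Nonempty) (hdisj : Disjoint T K) (hconn : (G.induce T).Connected) :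
    ∃ C, IsCompOf G K C ∧ T ⊆ C := by
  classical
  have hfin : {D : Set V | T ⊆ D ∧ Disjoint D K ∧ (G.induce D).Connected}.Finite :=
    Set.toFinite _
  obtain ⟨C, ⟨hTC, hCK, hCconn⟩, hmax⟩ :=
    Set.Finite.exists_maximalFor id _ hfin ⟨T, subset_rfl, hdisj, hconn⟩
  refine ⟨C, ⟨hne.mono hTC, hCK, hCconn, ?_⟩, hTC⟩
  intro D hCD hDK hDconn
  exact Set.Subset.antisymm (hmax ⟨hTC.trans hCD, hDK, hDconn⟩ hCD) hCD

/-- Walking to `aa` inside `C`, we find a connected subset of `C \ {aa}` containing the start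
and a vertex adjacent to `aa`. -/
lemma exists_adj_connected_set (G : SimpleGraph V) {C : Set V} {aa : V}
    {x r : ↥C} (p : (G.induce C).Walk x r) (hr : (r : V) = aa) (hx : (x : V) ≠ aa) :
    ∃ w, G.Adj w aa ∧
      ∃ T : Set V, ↑x ∈ T ∧ w ∈ T ∧ T ⊆ C \ {aa} ∧ (G.induce T).Connected := by
  induction p with
  | nil => exact absurd hr hx
  | @cons x y r h q ih =>
    by_cases hy : (y : V) = aa
    · refine ⟨↑x, ?_, {↑x}, rfl, rfl, ?_, induce_singleton_connected' G _⟩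
      · have hadj : G.Adj ↑x ↑y := h
        rwa [hy] at hadj
      · rintro z hz
        rcases hz with rfl
        exact ⟨x.2, hx⟩
    · obtain ⟨w, hw, T, hyT, hwT, hTsub, hTconn⟩ := ih hr hy
      refine ⟨w, hw, {↑x, ↑y} ∪ T, Or.inl (Or.inl rfl), Or.inr hwT, ?_, ?_⟩
      · intro z hz
        simp only [Set.mem_union, Set.mem_insert_iff, Set.mem_singleton_iff] at hz
        rcases hz with (rfl | rfl) | hz
        · exact ⟨x.2, hx⟩
        · exact ⟨y.2, hy⟩
        · exact hTsub hz
      · exact induce_union_connected (induce_pair_connected_of_adj (by exact h)).preconnected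
          hTconn.preconnected ⟨↑y, Or.inr rfl, hyT⟩

lemma exists_adj_set (G : SimpleGraph V) {C : Set V} {aa u : V}
    (hconn : (G.induce C).Connected) (ha : aa ∈ C) (hu : u ∈ C) (hne : u ≠ aa) :
    ∃ w, G.Adj w aa ∧
      ∃ T : Set V, u ∈ T ∧ w ∈ T ∧ T ⊆ C \ {aa} ∧ (G.induce T).Connected := by
  obtain ⟨p⟩ := hconn.preconnected ⟨u, hu⟩ ⟨aa, ha⟩
  exact exists_adj_connected_set G p rfl hne

section transfer

variable (G : SimpleGraph V) (a : V)

lemma image_preimage_aux {C : Set V} (haC : ∀ c ∈ C, c ≠ a) :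
    Subtype.val '' (Subtype.val ⁻¹' C : Set ↥({v : V | v ≠ a} : Set V)) = C := by
  ext v
  constructor
  · rintro ⟨⟨u, hu⟩, huC, rfl⟩
    exact huC
  · intro hv
    exact ⟨⟨v, haC v hv⟩, hv, rfl⟩

lemma comp_down (K : Set ↥({v : V | v ≠ a} : Set V))
    {C : Set V} (hne : C.Nonempty) (haC : a ∉ C)
    (hdisj : Disjoint C (Subtype.val '' K))
    (hconn : (G.induce C).Connected)
    (hmax : ∀ D : Set V, C ⊆ D → a ∉ D → Disjoint D (Subtype.val '' K) →
      (G.induce D).Connected → D = C) :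
    IsCompOf (G.induce {v : V | v ≠ a}) K (Subtype.val ⁻¹' C) := by
  have hCne : ∀ c ∈ C, c ≠ a := fun c hc h => haC (h ▸ hc)
  have himg : Subtype.val '' (Subtype.val ⁻¹' C : Set ↥({v : V | v ≠ a} : Set V)) = C :=
    image_preimage_aux a hCne
  obtain ⟨c, hc⟩ := hne
  refine ⟨⟨⟨c, hCne c hc⟩, hc⟩, ?_, ?_, ?_⟩
  · rw [Set.disjoint_left]
    rintro x hxC hxK
    exact Set.disjoint_left.mp hdisj hxC ⟨x, hxK, rfl⟩
  · rw [connected_image_iff', himg]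
    exact hconn
  · intro D' hCD' hD'K hD'conn
    have hsub : C ⊆ Subtype.val '' D' := by
      intro v hv
      exact ⟨⟨v, hCne v hv⟩, hCD' hv, rfl⟩
    have haD : a ∉ Subtype.val '' D' := by
      rintro ⟨u, _, hua⟩
      exact u.2 hua
    have hdisjD : Disjoint (Subtype.val '' D') (Subtype.val '' K) := by
      rw [Set.disjoint_left]
      rintro v ⟨x, hx, rfl⟩ ⟨k, hk, hkv⟩
      have : x = k := Subtype.val_injective hkv.symm
      exact Set.disjoint_left.mp hD'K hx (this ▸ hk)
    have hconnD : (G.induce (Subtype.val '' D')).Connected := by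
      rw [← connected_image_iff']
      exact hD'conn
    have hD : Subtype.val '' D' = C := hmax _ hsub haD hdisjD hconnD
    calc D' = Subtype.val ⁻¹' (Subtype.val '' D') :=
          (Set.preimage_image_eq _ Subtype.val_injective).symm
      _ = Subtype.val ⁻¹' C := by rw [hD]

lemma comp_up (K : Set ↥({v : V | v ≠ a} : Set V)) {C' : Set ↥({v : V | v ≠ a} : Set V)}
    (h : IsCompOf (G.induce {v : V | v ≠ a}) K C') :
    IsCompOf G (Subtype.val '' K ∪ {a}) (Subtype.val '' C') := by
  obtain ⟨hne, hdisj, hconn, hmax⟩ := h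
  refine ⟨hne.image _, ?_, (connected_image_iff' G _ _).mp hconn, ?_⟩
  · rw [Set.disjoint_left]
    rintro v ⟨c, hc, rfl⟩ (⟨k, hk, hkv⟩ | hva)
    · have : c = k := Subtype.val_injective hkv.symm
      exact Set.disjoint_left.mp hdisj hc (this ▸ hk)
    · exact c.2 hva
  · intro D hCD hDdisj hDconn
    have haD : a ∉ D := fun h => Set.disjoint_left.mp hDdisj h (Or.inr rfl)
    have hDne : ∀ d ∈ D, d ≠ a := fun d hd h => haD (h ▸ hd)
    have himg : Subtype.val '' (Subtype.val ⁻¹' D : Set ↥({v : V | v ≠ a} : Set V)) = D :=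
      image_preimage_aux a hDne
    have hsub : C' ⊆ Subtype.val ⁻¹' D := fun c hc => hCD ⟨c, hc, rfl⟩
    have hdisj' : Disjoint (Subtype.val ⁻¹' D : Set ↥({v : V | v ≠ a} : Set V)) K := by
      rw [Set.disjoint_left]
      intro x hx hxK
      exact Set.disjoint_left.mp hDdisj hx (Or.inl ⟨x, hxK, rfl⟩)
    have hconn' : ((G.induce {v : V | v ≠ a}).induce (Subtype.val ⁻¹' D)).Connected := by
      rw [connected_image_iff', himg]
      exact hDconn
    have := hmax _ hsub hdisj' hconn'
    rw [← himg, this]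

end transfer

theorem stmt3 [Fintype V] (G : SimpleGraph V) (a : V)
    (K : Set {v : V // v ∈ ({v : V | v ≠ a} : Set V)})
    (hK : IsPMC (G.induce {v : V | v ≠ a}) K) :
    IsPMC G (Subtype.val '' K) ∨ IsPMC G (Subtype.val '' K ∪ {a}) := by
  classical
  set Kv : Set V := Subtype.val '' K with hKv
  have haKv : a ∉ Kv := by rintro ⟨k, hk, hka⟩; exact k.2 hka
  -- the component of `G \ Kv` containing `a`
  obtain ⟨Ca, hCa, haCa⟩ : ∃ C, IsCompOf G Kv C ∧ a ∈ C := by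
    obtain ⟨C, h1, h2⟩ := exists_comp_extension G Kv {a} ⟨a, rfl⟩
      (Set.disjoint_left.mpr (by rintro v rfl; exact haKv))
      (induce_singleton_connected' G a)
    exact ⟨C, h1, h2 rfl⟩
  by_cases hfull : ∀ v ∈ Kv, ∃ u ∈ Ca, G.Adj u v
  · -- `Ca` is full: `Kv ∪ {a}` is a PMC of `G`
    right
    constructor
    · -- (a): no full component
      intro C hC
      obtain ⟨hCne, hCdisj, hCconn, hCmax⟩ := hC
      have haC : a ∉ C := fun h => Set.disjoint_left.mp hCdisj h (Or.inr rfl)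
      have hC' : IsCompOf (G.induce {v : V | v ≠ a}) K (Subtype.val ⁻¹' C) := by
        refine comp_down G a K hCne haC (hCdisj.mono_right Set.subset_union_left) hCconn ?_
        intro D hCD haD hDK hDconn
        refine hCmax D hCD ?_ hDconn
        rw [Set.disjoint_union_right]
        exact ⟨hDK, Set.disjoint_singleton_right.mpr haD⟩
      intro hfl
      refine hK.1 _ hC' ?_
      intro v hv
      obtain ⟨u, hu, huv⟩ := hfl ↑v (Or.inl ⟨v, hv, rfl⟩)
      exact ⟨⟨u, fun h => haC (h ▸ hu)⟩, hu, huv⟩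
    · -- (b): covering non-adjacent pairs
      intro x hx y hy hxy hnadj
      have key : ∀ x' : V, x' ∈ Kv → ¬ G.Adj x' a →
          ∃ C : Set V, IsCompOf G (Kv ∪ {a}) C ∧
            (∃ u ∈ C, G.Adj u x') ∧ (∃ u ∈ C, G.Adj u a) := by
        intro x' hx' hnadj'
        obtain ⟨u, hu, huv⟩ := hfull x' hx'
        have hua : u ≠ a := fun h => hnadj' (by rw [← h]; exact huv.symm)
        obtain ⟨w, hwadj, T, huT, hwT, hTsub, hTconn⟩ :=
          exists_adj_set G hCa.2.2.1 haCa hu hua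
        have hTdisj : Disjoint T (Kv ∪ {a}) := by
          rw [Set.disjoint_union_right]
          constructor
          · exact hCa.2.1.mono_left (hTsub.trans Set.diff_subset)
          · rw [Set.disjoint_singleton_right]
            exact fun h => (hTsub h).2 rfl
        obtain ⟨D, hD, hTD⟩ := exists_comp_extension G (Kv ∪ {a}) T ⟨u, huT⟩ hTdisj hTconn
        exact ⟨D, hD, ⟨u, hTD huT, huv⟩, ⟨w, hTD hwT, hwadj⟩⟩
      rcases hx with hx | hx <;> rcases hy with hy | hy
      · -- both in Kv
        obtain ⟨x', hx'K, rfl⟩ := hx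
        obtain ⟨y', hy'K, rfl⟩ := hy
        have hne' : x' ≠ y' := fun h => hxy (by rw [h])
        obtain ⟨C', hC', ⟨u1, hu1, hadj1⟩, ⟨u2, hu2, hadj2⟩⟩ :=
          hK.2 x' hx'K y' hy'K hne' hnadj
        exact ⟨Subtype.val '' C', comp_up G a K hC',
          ⟨↑u1, ⟨u1, hu1, rfl⟩, hadj1⟩, ⟨↑u2, ⟨u2, hu2, rfl⟩, hadj2⟩⟩
      · -- x ∈ Kv, y = a
        rcases hy with rfl
        obtain ⟨C, hC, h1, h2⟩ := key x hx hnadj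
        exact ⟨C, hC, h1, h2⟩
      · -- x = a, y ∈ Kv
        rcases hx with rfl
        obtain ⟨C, hC, h1, h2⟩ := key y hy (fun h => hnadj h.symm)
        exact ⟨C, hC, h2, h1⟩
      · rcases hx with rfl; rcases hy with rfl; exact absurd rfl hxy
  · -- `Ca` is not full: `Kv` is a PMC of `G`
    left
    constructor
    · -- (a)
      intro C hC
      by_cases haC : a ∈ C
      · have hU : (G.induce (C ∪ Ca)).Connected :=
          induce_union_connected hC.2.2.1.preconnected hCa.2.2.1.preconnected ⟨a, haC, haCa⟩
        have hUdisj : Disjoint (C ∪ Ca) Kv := Disjoint.union_left hC.2.1 hCa.2.1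
        have h1 : C ∪ Ca = C := hC.2.2.2 _ Set.subset_union_left hUdisj hU
        have h2 : C ∪ Ca = Ca := hCa.2.2.2 _ Set.subset_union_right hUdisj hU
        rw [show C = Ca by rw [← h1, h2]]
        exact hfull
      · obtain ⟨hCne, hCdisj, hCconn, hCmax⟩ := hC
        have hC' : IsCompOf (G.induce {v : V | v ≠ a}) K (Subtype.val ⁻¹' C) :=
          comp_down G a K hCne haC hCdisj hCconn
            (fun D hCD _ hDK hDconn => hCmax D hCD hDK hDconn)
        intro hfl
        refine hK.1 _ hC' ?_
        intro v hv
        obtain ⟨u, hu, huv⟩ := hfl ↑v ⟨v, hv, rfl⟩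
        exact ⟨⟨u, fun h => haC (h ▸ hu)⟩, hu, huv⟩
    · -- (b)
      intro x hx y hy hxy hnadj
      obtain ⟨x', hx'K, rfl⟩ := hx
      obtain ⟨y', hy'K, rfl⟩ := hy
      have hne' : x' ≠ y' := fun h => hxy (by rw [h])
      obtain ⟨C', hC', ⟨u1, hu1, hadj1⟩, ⟨u2, hu2, hadj2⟩⟩ :=
        hK.2 x' hx'K y' hy'K hne' hnadj
      have hCvdisj : Disjoint (Subtype.val '' C') Kv := by
        rw [Set.disjoint_left]
        rintro v ⟨c, hc, rfl⟩ ⟨k, hk, hkv⟩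
        have : c = k := Subtype.val_injective hkv.symm
        exact Set.disjoint_left.mp hC'.2.1 hc (this ▸ hk)
      have hCvconn : (G.induce (Subtype.val '' C')).Connected :=
        (connected_image_iff' G _ _).mp hC'.2.2.1
      obtain ⟨D, hD, hsub⟩ := exists_comp_extension G Kv (Subtype.val '' C')
        (hC'.1.image _) hCvdisj hCvconn
      exact ⟨D, hD, ⟨↑u1, hsub ⟨u1, hu1, rfl⟩, hadj1⟩, ⟨↑u2, hsub ⟨u2, hu2, rfl⟩, hadj2⟩⟩
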